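/- (Covering construction (4.18)–(4.19)) Let T ⊂ ℝ be a compact countable set and let τ_0 > 0. Then there exist an integer L ≥ 0, real numbers λ_1,…,λ_L, radii τ_1,…,τ_L ∈ (0, τ_0) and a number σ_0 ∈ (0, τ_0) such that: (1) T ⊆ ⋃_{ℓ=1}^L (λ_ℓ − τ_ℓ, λ_ℓ + τ_ℓ); (2) for each ℓ there exists λ̃_ℓ ∈ T with (λ_ℓ − τ_ℓ, λ_ℓ + τ_ℓ) ⊆ (λ̃_ℓ − τ_0, λ̃_ℓ + τ_0); and (3) for all ℓ ≠ k, the distance between the intervals (λ_ℓ − τ_ℓ, λ_ℓ + τ_ℓ) and (λ_k − τ_k, λ_k + τ_k) is greater than 4σ_0. -/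

import Mathlib

open scoped BigOperators

/-- covering construction (4.18)–(4.19): for a compact countable set `T ⊆ ℝ`
and `τ₀ > 0` there are finitely many open intervals `(λ_ℓ − τ_ℓ, λ_ℓ + τ_ℓ)` with radii
`τ_ℓ ∈ (0,τ₀)` covering `T`, each contained in `(λ̃_ℓ − τ₀, λ̃_ℓ + τ₀)` for some `λ̃_ℓ ∈ T`,
and mutually at distance greater than `4σ₀` for some `σ₀ ∈ (0,τ₀)`. -/
theorem stmt7 (T : Set ℝ) (hTc : IsCompact T) (hTcount : T.Countable) (τ₀ : ℝ) (hτ₀ : 0 < τ₀) :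
    ∃ (L : ℕ) (lam τ : Fin L → ℝ) (σ₀ : ℝ),
      (∀ ℓ, 0 < τ ℓ ∧ τ ℓ < τ₀) ∧
      0 < σ₀ ∧ σ₀ < τ₀ ∧
      (T ⊆ ⋃ ℓ : Fin L, Set.Ioo (lam ℓ - τ ℓ) (lam ℓ + τ ℓ)) ∧
      (∀ ℓ, ∃ lamt ∈ T,
        Set.Ioo (lam ℓ - τ ℓ) (lam ℓ + τ ℓ) ⊆ Set.Ioo (lamt - τ₀) (lamt + τ₀)) ∧
      (∀ ℓ k, ℓ ≠ k →
        4 * σ₀ < sInf { d : ℝ | ∃ a ∈ Set.Ioo (lam ℓ - τ ℓ) (lam ℓ + τ ℓ),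
          ∃ b ∈ Set.Ioo (lam k - τ k) (lam k + τ k), d = |a - b| }) := by
  classical
  -- pick a point outside T in every nonempty open interval
  have hpick : ∀ a b : ℝ, a < b → ∃ y, a < y ∧ y < b ∧ y ∉ T := by
    intro a b hab
    by_contra h
    push_neg at h
    have hsub : Set.Ioo a b ⊆ T := fun y hy => h y hy.1 hy.2
    have h0 : MeasureTheory.volume (Set.Ioo a b) = 0 :=
      le_antisymm (le_trans (MeasureTheory.measure_mono hsub)
        (le_of_eq (hTcount.measure_zero _))) zero_le
    rw [Real.volume_Ioo, ENNReal.ofReal_eq_zero] at h0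
    linarith
  -- points outside T have positive distance to T
  have hsep : ∀ y : ℝ, y ∉ T → ∃ ε > 0, ∀ t ∈ T, ε ≤ |t - y| := by
    intro y hy
    rcases Metric.isOpen_iff.1 hTc.isClosed.isOpen_compl y hy with ⟨ε, hε, hball⟩
    refine ⟨ε, hε, fun t ht => ?_⟩
    by_contra hlt
    push_neg at hlt
    exact hball (by rwa [Metric.mem_ball, Real.dist_eq]) ht
  -- bound for T
  obtain ⟨r, hr⟩ := hTc.isBounded.subset_closedBall 0
  set M : ℝ := max r 0 with hM_def
  have hM0 : 0 ≤ M := le_max_right _ _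
  have hM : ∀ t ∈ T, |t| ≤ M := by
    intro t ht
    have := hr ht
    rw [Metric.mem_closedBall, Real.dist_eq, sub_zero] at this
    exact le_trans this (le_max_left _ _)
  -- grid
  set s : ℝ := τ₀ / 4 with hs_def
  have hs : 0 < s := by positivity
  set x : ℕ → ℝ := fun n => -M - s + n * s with hx_def
  have hxsucc : ∀ n : ℕ, x (n + 1) = x n + s := by
    intro n
    simp only [hx_def]
    push_cast
    ring
  set K : ℕ := ⌈2 * M / s⌉₊ with hK_def
  set N : ℕ := K + 2 with hN_def
  have hKs : 2 * M ≤ K * s := by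
    have h := Nat.le_ceil (2 * M / s)
    rw [div_le_iff₀ hs] at h
    exact h
  have hxN : M + s ≤ x N := by
    simp only [hx_def, hN_def]
    push_cast
    nlinarith
  have hx0 : x 0 = -M - s := by simp [hx_def]
  have hxlt : ∀ n : ℕ, x n < x n + s / 2 := fun n => by linarith
  clear_value M s x
  choose c hc1 hc2 hcT using fun n => hpick (x n) (x n + s / 2) (hxlt n)
  have hgap1 : ∀ n, s / 2 < c (n + 1) - c n := by
    intro n
    have h1 := hc1 (n + 1)
    have h2 := hc2 n
    rw [hxsucc n] at h1
    linarith
  have hgap2 : ∀ n, c (n + 1) - c n < 3 * s / 2 := by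
    intro n
    have h1 := hc1 n
    have h2 := hc2 (n + 1)
    rw [hxsucc n] at h2
    linarith
  have hmono : StrictMono c := strictMono_nat_of_lt_succ fun n => by
    have := hgap1 n; linarith
  choose ε hε0 hεT using fun n => hsep (c n) (hcT n)
  set E : ℝ := (Finset.range (N + 1)).inf' (by simp) ε with hE_def
  have hE0 : 0 < E := by
    rw [hE_def, Finset.lt_inf'_iff]
    intro b _
    exact hε0 b
  set δ : ℝ := min (τ₀ / 32) (E / 2) with hδ_def
  have hδ0 : 0 < δ := lt_min (by positivity) (by positivity)
  have hδτ : δ ≤ τ₀ / 32 := min_le_left _ _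
  have hδε : ∀ j, j ≤ N → 2 * δ ≤ ε j := by
    intro j hj
    have h1 : δ ≤ E / 2 := min_le_right _ _
    have h2 : E ≤ ε j := Finset.inf'_le _ (Finset.mem_range.2 (by omega))
    linarith
  clear_value E δ
  -- margin from T to cut points
  have hmargin : ∀ j, j ≤ N → ∀ t ∈ T, 2 * δ ≤ |t - c j| := by
    intro j hj t ht
    exact le_trans (hδε j hj) (hεT j t ht)
  set F : Finset ℕ := (Finset.range N).filter
    (fun j => (T ∩ Set.Ioo (c j + δ) (c (j + 1) - δ)).Nonempty) with hF_def
  set L : ℕ := F.card with hL_def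
  set e : Fin L → ℕ := fun i => ((F.equivFin.symm i : F) : ℕ) with he_def
  have heF : ∀ i, e i ∈ F := fun i => (F.equivFin.symm i).2
  have heN : ∀ i, e i < N := fun i => Finset.mem_range.1 (Finset.mem_filter.1 (heF i)).1
  have heNe : ∀ i, (T ∩ Set.Ioo (c (e i) + δ) (c (e i + 1) - δ)).Nonempty :=
    fun i => (Finset.mem_filter.1 (heF i)).2
  have he_inj : Function.Injective e := by
    intro i j h
    exact F.equivFin.symm.injective (Subtype.ext h)
  refine ⟨L, fun i => (c (e i) + c (e i + 1)) / 2,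
    fun i => (c (e i + 1) - c (e i)) / 2 - δ, δ / 4, ?_, by positivity, by linarith, ?_, ?_, ?_⟩
  · -- radii bounds
    intro i
    have g1 := hgap1 (e i)
    have g2 := hgap2 (e i)
    constructor
    · rw [hs_def] at g1; linarith
    · rw [hs_def] at g2; linarith
  · -- cover
    intro t ht
    have htM := abs_le.1 (hM t ht)
    have hc0 : c 0 < t := by
      have h2 := hc2 0
      rw [hx0] at h2
      linarith [htM.1]
    obtain ⟨j, hj_le, hjP, hj_max⟩ :
        ∃ j, j ≤ K + 1 ∧ c j < t ∧ ∀ m, j < m → m ≤ K + 1 → ¬ c m < t :=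
      ⟨Nat.findGreatest (fun i => c i < t) (K + 1), Nat.findGreatest_le _,
        Nat.findGreatest_spec (P := fun i => c i < t) (Nat.zero_le _) hc0,
        fun m h1 h2 => Nat.findGreatest_is_greatest h1 h2⟩
    have hmar_j : 2 * δ ≤ t - c j := by
      have := hmargin j (by omega) t ht
      rwa [abs_of_pos (by linarith)] at this
    have hlt : t < c (j + 1) := by
      by_cases hcase : j = K + 1
      · have hN1 : c N > M + s := lt_of_le_of_lt hxN (hc1 N)
        have : j + 1 = N := by omega
        rw [this]
        linarith [htM.2]
      · have h1 : ¬ (c (j + 1) < t) := hj_max (j + 1) (by omega) (by omega)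
        push_neg at h1
        rcases lt_or_eq_of_le h1 with h | h
        · exact h
        · exfalso
          have := hmargin (j + 1) (by omega) t ht
          rw [h] at this
          simp at this
          linarith
    have hmar_j1 : 2 * δ ≤ c (j + 1) - t := by
      have h := hmargin (j + 1) (by omega) t ht
      rw [abs_of_neg (by linarith)] at h
      linarith
    have hjF : j ∈ F := by
      rw [hF_def, Finset.mem_filter]
      refine ⟨Finset.mem_range.2 (by omega), ⟨t, ht, ?_⟩⟩
      rw [Set.mem_Ioo]
      constructor <;> linarith
    refine Set.mem_iUnion.2 ⟨F.equivFin ⟨j, hjF⟩, ?_⟩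
    have hej : e (F.equivFin ⟨j, hjF⟩) = j := by
      simp [he_def]
    beta_reduce
    rw [Set.mem_Ioo, hej]
    constructor <;> linarith
  · -- containment in τ₀-neighborhood of a point of T
    intro i
    beta_reduce
    obtain ⟨t, htT, htI⟩ := heNe i
    rw [Set.mem_Ioo] at htI
    refine ⟨t, htT, ?_⟩
    intro a ha
    rw [Set.mem_Ioo] at ha ⊢
    have g2 := hgap2 (e i)
    rw [hs_def] at g2
    constructor <;> linarith [htI.1, htI.2, ha.1, ha.2]
  · -- separation
    intro ℓ k hne
    beta_reduce
    have hjk : e ℓ ≠ e k := fun h => hne (he_inj h)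
    have hlow : ∀ d ∈ { d : ℝ | ∃ a ∈ Set.Ioo ((c (e ℓ) + c (e ℓ + 1)) / 2 -
          ((c (e ℓ + 1) - c (e ℓ)) / 2 - δ)) ((c (e ℓ) + c (e ℓ + 1)) / 2 +
          ((c (e ℓ + 1) - c (e ℓ)) / 2 - δ)),
        ∃ b ∈ Set.Ioo ((c (e k) + c (e k + 1)) / 2 - ((c (e k + 1) - c (e k)) / 2 - δ))
          ((c (e k) + c (e k + 1)) / 2 + ((c (e k + 1) - c (e k)) / 2 - δ)), d = |a - b| },
        2 * δ ≤ d := by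
      intro d hd
      obtain ⟨a, ha, b, hb, rfl⟩ := hd
      rw [Set.mem_Ioo] at ha hb
      rcases lt_or_gt_of_ne hjk with h | h
      · have hle : c (e ℓ + 1) ≤ c (e k) := hmono.monotone (by omega)
        rw [abs_of_neg (by linarith)]
        linarith
      · have hle : c (e k + 1) ≤ c (e ℓ) := hmono.monotone (by omega)
        rw [abs_of_pos (by linarith)]
        linarith
    have hnonempty : ((c (e ℓ) + c (e ℓ + 1)) / 2 ∈ Set.Ioo ((c (e ℓ) + c (e ℓ + 1)) / 2 -
        ((c (e ℓ + 1) - c (e ℓ)) / 2 - δ)) ((c (e ℓ) + c (e ℓ + 1)) / 2 +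
        ((c (e ℓ + 1) - c (e ℓ)) / 2 - δ))) := by
      have g1 := hgap1 (e ℓ)
      rw [hs_def] at g1
      rw [Set.mem_Ioo]
      constructor <;> linarith
    have hnonempty' : ((c (e k) + c (e k + 1)) / 2 ∈ Set.Ioo ((c (e k) + c (e k + 1)) / 2 -
        ((c (e k + 1) - c (e k)) / 2 - δ)) ((c (e k) + c (e k + 1)) / 2 +
        ((c (e k + 1) - c (e k)) / 2 - δ))) := by
      have g1 := hgap1 (e k)
      rw [hs_def] at g1
      rw [Set.mem_Ioo]
      constructor <;> linarith
    have hSne : { d : ℝ | ∃ a ∈ Set.Ioo ((c (e ℓ) + c (e ℓ + 1)) / 2 -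
          ((c (e ℓ + 1) - c (e ℓ)) / 2 - δ)) ((c (e ℓ) + c (e ℓ + 1)) / 2 +
          ((c (e ℓ + 1) - c (e ℓ)) / 2 - δ)),
        ∃ b ∈ Set.Ioo ((c (e k) + c (e k + 1)) / 2 - ((c (e k + 1) - c (e k)) / 2 - δ))
          ((c (e k) + c (e k + 1)) / 2 + ((c (e k + 1) - c (e k)) / 2 - δ)),
          d = |a - b| }.Nonempty :=
      ⟨_, _, hnonempty, _, hnonempty', rfl⟩
    have := le_csInf hSne hlow
    linarith
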